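/- For a short-range potential V ≥ 0 with zero-energy scattering solution f, the scattering length a₀ satisfies 8πa₀ = ∫_{ℝ³} V(x) f(x) dx. -/

import Mathlib

/- STATEMENT 14: For a short-range (compactly supported, continuous)
potential V ≥ 0 whose zero-energy scattering solution f satisfies
(−Δ + ½V)f = 0, f(x) → 1 as |x| → ∞ and f(x) = 1 − a₀/|x| outside the
support of V (defining the scattering length a₀), one has
  8π a₀ = ∫ V(x) f(x) dx. -/

open MeasureTheory Filter

noncomputable section

abbrev R3 := EuclideanSpace ℝ (Fin 3)

/-- The Laplacian on ℝ³, Δf(x) = Σᵢ ∂²f/∂xᵢ²(x). -/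
def laplacian (f : R3 → ℝ) (x : R3) : ℝ :=
  ∑ i : Fin 3,
    fderiv ℝ (fun y => fderiv ℝ f y (EuclideanSpace.single i (1 : ℝ))) x
      (EuclideanSpace.single i (1 : ℝ))


namespace Scat
open Real Set MeasureTheory

variable (c : ℝ)

def beta (s : ℝ) : ℝ := s + c * Real.smoothTransition (2 - 2 * s / c)

def Phi (s : ℝ) : ℝ := -(beta c s) ^ (-(1/2) : ℝ)

variable {c}

lemma beta_pos (hc : 0 < c) {s : ℝ} (hs : -c/2 < s) : 0 < beta c s := by
  rcases le_or_gt s (c/2) with h | h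
  · have : Real.smoothTransition (2 - 2 * s / c) = 1 := by
      apply Real.smoothTransition.one_of_one_le
      have : 2 * s / c ≤ 1 := by rw [div_le_one hc]; linarith
      linarith
    rw [beta, this, mul_one]; linarith
  · have h0 : 0 ≤ Real.smoothTransition (2 - 2 * s / c) := Real.smoothTransition.nonneg _
    have := mul_nonneg hc.le h0
    unfold beta; linarith

lemma beta_eq_of_le (hc : 0 < c) {s : ℝ} (hs : c ≤ s) : beta c s = s := by
  have : Real.smoothTransition (2 - 2 * s / c) = 0 := by
    apply Real.smoothTransition.zero_of_nonpos
    have : 1 ≤ s / c := (one_le_div hc).2 hs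
    have : 2 ≤ 2 * s / c := by rw [mul_div_assoc]; linarith
    linarith
  rw [beta, this, mul_zero, add_zero]

lemma contDiff_beta : ContDiff ℝ 2 (beta c) := by
  have h : ContDiff ℝ 2 (fun s : ℝ => 2 - 2 * s / c) :=
    contDiff_const.sub ((contDiff_const.mul contDiff_id).div_const c)
  exact contDiff_id.add (contDiff_const.mul (Real.smoothTransition.contDiff.comp h))

lemma contDiffOn_Phi (hc : 0 < c) : ContDiffOn ℝ 2 (Phi c) (Ioi (-c/2)) := by
  intro s hs
  exact (((contDiff_beta.contDiffAt).rpow_const_of_ne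
    (ne_of_gt (beta_pos hc hs))).neg).contDiffWithinAt


open Real Set
variable {c : ℝ}

lemma mem_S {s : ℝ} (hc : 0 < c) (hs : 0 ≤ s) : s ∈ Ioi (-c/2) := by
  simp only [mem_Ioi]; linarith

lemma contDiffOn_dPhi (hc : 0 < c) : ContDiffOn ℝ 1 (deriv (Phi c)) (Ioi (-c/2)) :=
  (contDiffOn_Phi hc).deriv_of_isOpen isOpen_Ioi (by norm_num)

lemma hasDerivAt_Phi (hc : 0 < c) {s : ℝ} (hs : s ∈ Ioi (-c/2)) :
    HasDerivAt (Phi c) (deriv (Phi c) s) s :=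
  ((((contDiffOn_Phi hc).differentiableOn (by norm_num)).differentiableAt
    (isOpen_Ioi.mem_nhds hs))).hasDerivAt

lemma hasDerivAt_dPhi (hc : 0 < c) {s : ℝ} (hs : s ∈ Ioi (-c/2)) :
    HasDerivAt (deriv (Phi c)) (deriv (deriv (Phi c)) s) s :=
  (((contDiffOn_dPhi hc).differentiableOn (by norm_num)).differentiableAt
    (isOpen_Ioi.mem_nhds hs)).hasDerivAt

lemma continuousOn_ddPhi (hc : 0 < c) :
    ContinuousOn (deriv (deriv (Phi c))) (Ioi (-c/2)) :=
  (contDiffOn_dPhi hc).continuousOn_deriv_of_isOpen isOpen_Ioi (le_refl _)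

lemma Phi_eventuallyEq (hc : 0 < c) {s : ℝ} (hs : c < s) :
    Phi c =ᶠ[nhds s] fun t => -t ^ (-(1/2) : ℝ) := by
  filter_upwards [isOpen_Ioi.mem_nhds (show s ∈ Ioi c from hs)] with t ht
  rw [Phi, beta_eq_of_le hc (le_of_lt ht)]

lemma dPhi_eq (hc : 0 < c) {s : ℝ} (hs : c < s) :
    deriv (Phi c) s = (1/2) * s ^ (-(3/2) : ℝ) := by
  have hs0 : (0:ℝ) < s := lt_trans hc hs
  rw [(Phi_eventuallyEq hc hs).deriv_eq]
  rw [(((Real.hasDerivAt_rpow_const (p := (-(1/2) : ℝ)) (Or.inl hs0.ne'))).fun_neg).deriv]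
  rw [show (-(1/2) - 1 : ℝ) = -(3/2) by norm_num]
  ring

lemma ddPhi_eq (hc : 0 < c) {s : ℝ} (hs : c < s) :
    deriv (deriv (Phi c)) s = -(3/4) * s ^ (-(5/2) : ℝ) := by
  have hs0 : (0:ℝ) < s := lt_trans hc hs
  have h : deriv (Phi c) =ᶠ[nhds s] fun t => (1/2) * t ^ (-(3/2) : ℝ) := by
    filter_upwards [isOpen_Ioi.mem_nhds (show s ∈ Ioi c from hs)] with t ht
    exact dPhi_eq hc ht
  rw [h.deriv_eq]
  rw [((Real.hasDerivAt_rpow_const (p := (-(3/2) : ℝ)) (Or.inl hs0.ne')).const_mul (1/2)).deriv]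
  rw [show (-(3/2) - 1 : ℝ) = -(5/2) by norm_num]
  ring

lemma G_eq_zero (hc : 0 < c) {s : ℝ} (hs : c < s) :
    4 * s * deriv (deriv (Phi c)) s + 6 * deriv (Phi c) s = 0 := by
  have hs0 : (0:ℝ) < s := lt_trans hc hs
  rw [dPhi_eq hc hs, ddPhi_eq hc hs]
  have : s * s ^ (-(5/2) : ℝ) = s ^ (-(3/2) : ℝ) := by
    nth_rewrite 1 [← Real.rpow_one s]
    rw [← Real.rpow_add hs0]; norm_num
  nlinarith [this]

lemma hasDerivAt_A (hc : 0 < c) (r : ℝ) :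
    HasDerivAt (fun r => 2 * r^3 * deriv (Phi c) (r^2))
      (r^2 * (4 * r^2 * deriv (deriv (Phi c)) (r^2) + 6 * deriv (Phi c) (r^2))) r := by
  have h1 : HasDerivAt (fun r : ℝ => r^2) (2*r) r := by simpa using hasDerivAt_pow 2 r
  have h2 : HasDerivAt (deriv (Phi c)) (deriv (deriv (Phi c)) (r^2)) (r^2) :=
    hasDerivAt_dPhi hc (mem_S hc (sq_nonneg r))
  have h3 : HasDerivAt (fun r : ℝ => deriv (Phi c) (r^2))
      (deriv (deriv (Phi c)) (r^2) * (2*r)) r :=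
    HasDerivAt.comp_of_eq r h2 h1 rfl
  have h4 : HasDerivAt (fun r : ℝ => 2 * r^3) (6*r^2) r := by
    have h := (hasDerivAt_pow 3 r).const_mul (2:ℝ)
    exact h.congr_deriv (by push_cast; ring)
  have := h4.mul h3
  exact this.congr_deriv (by ring)

lemma continuousOn_F (hc : 0 < c) (s : Set ℝ) :
    ContinuousOn (fun y : ℝ => y^2 * (4*y^2 * deriv (deriv (Phi c)) (y^2)
      + 6 * deriv (Phi c) (y^2))) s := by
  have hsq : Continuous (fun y : ℝ => y^2) := by continuity
  have hmaps : ∀ y : ℝ, y ∈ s → y^2 ∈ Ioi (-c/2) := fun y _ => mem_S hc (sq_nonneg y)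
  have h1 : ContinuousOn (fun y : ℝ => deriv (Phi c) (y^2)) s :=
    ((contDiffOn_dPhi hc).continuousOn).comp hsq.continuousOn hmaps
  have h2 : ContinuousOn (fun y : ℝ => deriv (deriv (Phi c)) (y^2)) s :=
    (continuousOn_ddPhi hc).comp hsq.continuousOn hmaps
  exact (hsq.continuousOn.mul
    (((continuousOn_const.mul hsq.continuousOn).mul h2).add (continuousOn_const.mul h1)))

lemma integral_radial (hc : 0 < c) {R : ℝ} (hR0 : 0 < R) (hR : c = R^2) :
    ∫ y in Ioi (0:ℝ), y^2 * (4*y^2 * deriv (deriv (Phi c)) (y^2)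
      + 6 * deriv (Phi c) (y^2)) = 1 := by
  set F : ℝ → ℝ := fun y => y^2 * (4*y^2 * deriv (deriv (Phi c)) (y^2)
      + 6 * deriv (Phi c) (y^2)) with hF
  set R' : ℝ := R + 1 with hR'
  have hR'0 : 0 < R' := by linarith
  have hF0 : ∀ y : ℝ, R' ≤ y → F y = 0 := by
    intro y hy
    have : c < y^2 := by rw [hR]; nlinarith
    simp only [hF, G_eq_zero hc this, mul_zero]
  have hsplit : Ioi (0:ℝ) = Ioc 0 R' ∪ Ioi R' := (Ioc_union_Ioi_eq_Ioi hR'0.le).symm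
  have hint1 : IntegrableOn F (Ioc 0 R') volume :=
    ((continuousOn_F hc _).integrableOn_Icc).mono_set Ioc_subset_Icc_self
  have hint2 : IntegrableOn F (Ioi R') volume :=
    (integrableOn_zero).congr_fun (fun y hy => (hF0 y (le_of_lt hy)).symm) measurableSet_Ioi
  rw [hsplit, setIntegral_union (Ioc_disjoint_Ioi le_rfl) measurableSet_Ioi hint1 hint2]
  have hz : ∫ y in Ioi R', F y = 0 := by
    rw [setIntegral_congr_fun measurableSet_Ioi (fun y hy => hF0 y (le_of_lt hy))]
    simp
  rw [hz, add_zero, ← intervalIntegral.integral_of_le hR'0.le]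
  have hftc := intervalIntegral.integral_eq_sub_of_hasDerivAt
    (f := fun r : ℝ => 2 * r^3 * deriv (Phi c) (r^2)) (f' := F)
    (a := 0) (b := R')
    (fun x _ => hasDerivAt_A hc x)
    (((continuousOn_F hc _).intervalIntegrable))
  rw [hftc]
  have hc' : c < R'^2 := by rw [hR]; nlinarith
  rw [dPhi_eq hc hc']
  have hrp : (R'^2 : ℝ) ^ (-(3/2) : ℝ) = (R'^3)⁻¹ := by
    rw [← Real.rpow_natCast R' 2, ← Real.rpow_mul hR'0.le]
    norm_num
  rw [hrp]
  field_simp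
  simp

def w (c : ℝ) : R3 → ℝ := fun x => Phi c (‖x‖^2)

def ee (i : Fin 3) : R3 := EuclideanSpace.single i (1:ℝ)

lemma contDiff_w (hc : 0 < c) : ContDiff ℝ 2 (w c) := by
  rw [contDiff_iff_contDiffAt]
  intro x
  have h1 : ContDiffAt ℝ 2 (Phi c) (‖x‖^2) :=
    (contDiffOn_Phi hc).contDiffAt (isOpen_Ioi.mem_nhds (mem_S hc (sq_nonneg _)))
  exact h1.comp x ((contDiff_norm_sq ℝ).contDiffAt)

lemma hasFDerivAt_w (hc : 0 < c) (x : R3) :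
    HasFDerivAt (w c) ((deriv (Phi c) (‖x‖^2)) • (2 • (innerSL ℝ x))) x :=
  (hasDerivAt_Phi hc (mem_S hc (sq_nonneg _))).comp_hasFDerivAt x
    (hasStrictFDerivAt_norm_sq x).hasFDerivAt

lemma pd_w (hc : 0 < c) (x : R3) (i : Fin 3) :
    fderiv ℝ (w c) x (ee i) = deriv (Phi c) (‖x‖^2) * (2 * x i) := by
  rw [(hasFDerivAt_w hc x).fderiv]
  simp [ee, EuclideanSpace.inner_single_right, real_inner_comm]

lemma fderiv_pd_w (hc : 0 < c) (x : R3) (i : Fin 3) :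
    fderiv ℝ (fun y => fderiv ℝ (w c) y (ee i)) x (ee i)
      = deriv (deriv (Phi c)) (‖x‖^2) * (2 * x i) * (2 * x i)
        + deriv (Phi c) (‖x‖^2) * 2 := by
  have hfun : (fun y => fderiv ℝ (w c) y (ee i))
      = fun y => deriv (Phi c) (‖y‖^2) * (2 * y i) := funext (fun y => pd_w hc y i)
  rw [hfun]
  have hA : HasFDerivAt (fun y : R3 => deriv (Phi c) (‖y‖^2))
      ((deriv (deriv (Phi c)) (‖x‖^2)) • (2 • (innerSL ℝ x))) x :=
    (hasDerivAt_dPhi hc (mem_S hc (sq_nonneg ‖x‖))).comp_hasFDerivAt (f := fun y : R3 => ‖y‖^2) x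
      (hasStrictFDerivAt_norm_sq x).hasFDerivAt
  have hB : HasFDerivAt (fun y : R3 => 2 * y i) ((2:ℝ) • (EuclideanSpace.proj i : R3 →L[ℝ] ℝ)) x :=
    (EuclideanSpace.proj i : R3 →L[ℝ] ℝ).hasFDerivAt.const_mul 2
  rw [(hA.fun_mul hB).fderiv]
  simp [ee, EuclideanSpace.inner_single_right, real_inner_comm]
  ring

lemma laplacian_w (hc : 0 < c) (x : R3) :
    laplacian (w c) x = 4 * ‖x‖^2 * deriv (deriv (Phi c)) (‖x‖^2)
      + 6 * deriv (Phi c) (‖x‖^2) := by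
  show (∑ i : Fin 3, fderiv ℝ (fun y => fderiv ℝ (w c) y (ee i)) x (ee i)) = _
  rw [Finset.sum_congr rfl (fun i _ => fderiv_pd_w hc x i)]
  have hnorm : ∑ i : Fin 3, (x i)^2 = ‖x‖^2 := by
    rw [EuclideanSpace.norm_eq, Real.sq_sqrt (by positivity)]
    simp
  rw [Finset.sum_add_distrib, Finset.sum_const]
  have h1 : ∑ i : Fin 3, deriv (deriv (Phi c)) (‖x‖^2) * (2 * x i) * (2 * x i)
      = ∑ i : Fin 3, (x i)^2 * (4 * deriv (deriv (Phi c)) (‖x‖^2)) :=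
    Finset.sum_congr rfl fun i _ => by ring
  rw [h1, ← Finset.sum_mul, hnorm]
  simp
  ring


lemma w_eq (hc : 0 < c) {x : R3} (hx : c ≤ ‖x‖^2) : w c x = -‖x‖⁻¹ := by
  have h0 : (0:ℝ) ≤ ‖x‖ := norm_nonneg x
  rw [w, Phi, beta_eq_of_le hc hx]
  congr 1
  rw [← Real.rpow_natCast ‖x‖ 2, ← Real.rpow_mul h0]
  norm_num
  rw [Real.rpow_neg h0, Real.rpow_one]

lemma laplacian_w_eq_zero (hc : 0 < c) {x : R3} (hx : c < ‖x‖^2) :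
    laplacian (w c) x = 0 := by
  rw [laplacian_w hc x]
  exact G_eq_zero hc hx

lemma continuous_laplacian_w (hc : 0 < c) : Continuous (laplacian (w c)) := by
  have : (laplacian (w c)) = fun x : R3 => 4 * ‖x‖^2 * deriv (deriv (Phi c)) (‖x‖^2)
      + 6 * deriv (Phi c) (‖x‖^2) := funext (laplacian_w hc)
  rw [this]
  rw [continuous_iff_continuousAt]
  intro x
  have hq : ContinuousAt (fun x : R3 => ‖x‖^2) x := by fun_prop
  have hmem : ‖x‖^2 ∈ Set.Ioi (-c/2) := mem_S hc (sq_nonneg _)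
  have h1 : ContinuousAt (deriv (Phi c)) (‖x‖^2) :=
    ((contDiffOn_dPhi hc).continuousOn).continuousAt (isOpen_Ioi.mem_nhds hmem)
  have h2 : ContinuousAt (deriv (deriv (Phi c))) (‖x‖^2) :=
    (continuousOn_ddPhi hc).continuousAt (isOpen_Ioi.mem_nhds hmem)
  have h1' : ContinuousAt (deriv (Phi c) ∘ fun y : R3 => ‖y‖^2) x :=
    ContinuousAt.comp (g := deriv (Phi c)) (f := fun y : R3 => ‖y‖^2) h1 hq
  have h2' : ContinuousAt (deriv (deriv (Phi c)) ∘ fun y : R3 => ‖y‖^2) x :=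
    ContinuousAt.comp (g := deriv (deriv (Phi c))) (f := fun y : R3 => ‖y‖^2) h2 hq
  exact ((continuousAt_const.mul hq).mul h2').add (continuousAt_const.mul h1')

lemma hasCompactSupport_laplacian_w (hc : 0 < c) {R : ℝ} (hR0 : 0 < R) (hR : c = R^2) :
    HasCompactSupport (laplacian (w c)) := by
  apply HasCompactSupport.intro (isCompact_closedBall (0:R3) R)
  intro x hx
  simp only [Metric.mem_closedBall, dist_zero_right, not_le] at hx
  apply laplacian_w_eq_zero hc
  rw [hR]
  have : 0 < R := hR0
  nlinarith

lemma integrable_laplacian_w (hc : 0 < c) {R : ℝ} (hR0 : 0 < R) (hR : c = R^2) :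
    Integrable (laplacian (w c)) (volume : Measure R3) :=
  (continuous_laplacian_w hc).integrable_of_hasCompactSupport
    (hasCompactSupport_laplacian_w hc hR0 hR)

lemma volume_ball_R3 : (volume (Metric.ball (0:R3) 1)).toReal = 4 * Real.pi / 3 := by
  rw [EuclideanSpace.volume_ball]
  have h12 : Real.Gamma (1/2) = Real.sqrt Real.pi := Real.Gamma_one_half_eq
  have h32 : Real.Gamma (3/2) = Real.sqrt Real.pi / 2 := by
    have := Real.Gamma_add_one (s := 1/2) (by norm_num)
    rw [show (1/2 : ℝ) + 1 = 3/2 by norm_num] at this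
    rw [this, h12]; ring
  have h52 : Real.Gamma (5/2) = 3/4 * Real.sqrt Real.pi := by
    have := Real.Gamma_add_one (s := 3/2) (by norm_num)
    rw [show (3/2 : ℝ) + 1 = 5/2 by norm_num] at this
    rw [this, h32]; ring
  have hcard : (Fintype.card (Fin 3) : ℝ) = 3 := by simp
  have hexp : ((Fintype.card (Fin 3) : ℝ) / 2 + 1) = 5/2 := by rw [hcard]; norm_num
  rw [hexp, h52]
  have hs : Real.sqrt Real.pi ^ Fintype.card (Fin 3) = Real.pi * Real.sqrt Real.pi := by
    rw [show Fintype.card (Fin 3) = 3 by simp]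
    rw [show (Real.sqrt Real.pi)^3 = (Real.sqrt Real.pi)^2 * Real.sqrt Real.pi by ring,
      Real.sq_sqrt Real.pi_nonneg]
  rw [hs]
  have hsne : Real.sqrt Real.pi ≠ 0 := by positivity
  have : Real.pi * Real.sqrt Real.pi / (3/4 * Real.sqrt Real.pi) = 4 * Real.pi / 3 := by
    field_simp
  rw [this]
  simp [ENNReal.toReal_ofReal (by positivity : (0:ℝ) ≤ 4 * Real.pi / 3)]

lemma integral_laplacian_w (hc : 0 < c) {R : ℝ} (hR0 : 0 < R) (hR : c = R^2) :
    ∫ x : R3, laplacian (w c) x = 4 * Real.pi := by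
  have hfun : (fun x : R3 => laplacian (w c) x)
      = fun x : R3 => (fun r : ℝ => 4 * r^2 * deriv (deriv (Phi c)) (r^2)
          + 6 * deriv (Phi c) (r^2)) ‖x‖ := funext (laplacian_w hc)
  have key := MeasureTheory.integral_fun_norm_addHaar (volume : Measure R3)
    (fun r : ℝ => 4 * r^2 * deriv (deriv (Phi c)) (r^2) + 6 * deriv (Phi c) (r^2))
  rw [hfun, key]
  have hdim : Module.finrank ℝ R3 = 3 := finrank_euclideanSpace_fin
  rw [hdim]
  have : ∫ y in Set.Ioi (0:ℝ), y ^ (3-1) • (4 * y^2 * deriv (deriv (Phi c)) (y^2)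
      + 6 * deriv (Phi c) (y^2)) = 1 := by
    rw [← integral_radial hc hR0 hR]
    apply MeasureTheory.setIntegral_congr_fun measurableSet_Ioi
    intro y _
    simp [smul_eq_mul]
  rw [this, measureReal_def, volume_ball_R3]
  simp
  ring

lemma integral_pd_eq_zero (u : R3 → ℝ) (hu : ContDiff ℝ 1 u)
    (hsupp : HasCompactSupport u) (v : R3) :
    ∫ x : R3, fderiv ℝ u x v = 0 := by
  have hint2 : Integrable (fun x : R3 => fderiv ℝ u x v) volume := by
    apply Continuous.integrable_of_hasCompactSupport
    · exact (hu.continuous_fderiv one_ne_zero).clm_apply continuous_const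
    · exact hsupp.fderiv_apply ℝ v
  have h := integral_mul_fderiv_eq_neg_fderiv_mul_of_integrable (μ := (volume : Measure R3))
    (f := fun _ : R3 => (1:ℝ)) (g := u) (v := v)
    (by simpa [fderiv_fun_const] using (integrable_zero R3 ℝ (volume : Measure R3)))
    (by simpa using hint2)
    (by simpa using hu.continuous.integrable_of_hasCompactSupport hsupp)
    (fun x _ => differentiableAt_const (1:ℝ)) (fun x _ => hu.differentiable one_ne_zero x)
  simpa [fderiv_fun_const] using h

lemma pd_contDiff (u : R3 → ℝ) (hu : ContDiff ℝ 2 u) (v : R3) :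
    ContDiff ℝ 1 (fun y => fderiv ℝ u y v) :=
  (hu.fderiv_right (le_refl 2)).clm_apply contDiff_const

lemma integral_laplacian_eq_zero (u : R3 → ℝ) (hu : ContDiff ℝ 2 u)
    (hsupp : HasCompactSupport u) :
    ∫ x : R3, laplacian u x = 0 := by
  unfold laplacian
  rw [MeasureTheory.integral_finset_sum]
  · apply Finset.sum_eq_zero
    intro i _
    exact integral_pd_eq_zero _ (pd_contDiff u hu _) (hsupp.fderiv_apply ℝ _) _
  · intro i _
    apply Continuous.integrable_of_hasCompactSupport
    · exact ((pd_contDiff u hu _).continuous_fderiv one_ne_zero).clm_apply continuous_const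
    · exact (hsupp.fderiv_apply ℝ _).fderiv_apply ℝ _

lemma laplacian_comb (u v : R3 → ℝ) (hu : ContDiff ℝ 2 u) (hv : ContDiff ℝ 2 v)
    (a b : ℝ) (x : R3) :
    laplacian (fun y => u y + a * v y + b) x = laplacian u x + a * laplacian v x := by
  unfold laplacian
  rw [Finset.mul_sum, ← Finset.sum_add_distrib]
  have key : ∀ i : Fin 3,
      fderiv ℝ (fun y => fderiv ℝ (fun z => u z + a * v z + b) y
        (EuclideanSpace.single i (1:ℝ))) x (EuclideanSpace.single i (1:ℝ))
      = fderiv ℝ (fun y => fderiv ℝ u y (EuclideanSpace.single i (1:ℝ))) x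
          (EuclideanSpace.single i (1:ℝ))
        + a * fderiv ℝ (fun y => fderiv ℝ v y (EuclideanSpace.single i (1:ℝ))) x
          (EuclideanSpace.single i (1:ℝ)) := by
    intro i
    set e := EuclideanSpace.single i (1:ℝ)
    have hstep : (fun y => fderiv ℝ (fun z => u z + a * v z + b) y e)
        = fun y => fderiv ℝ u y e + a * fderiv ℝ v y e := by
      funext y
      have hUV : HasFDerivAt (fun z => u z + a * v z + b)
          (fderiv ℝ u y + a • fderiv ℝ v y) y := by
        exact (((hu.differentiable (by norm_num) y).hasFDerivAt).add
          (((hv.differentiable (by norm_num) y).hasFDerivAt).const_mul a)).add_const b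
      rw [hUV.fderiv]
      simp
    rw [hstep]
    have h1 : DifferentiableAt ℝ (fun y => fderiv ℝ u y e) x :=
      ((pd_contDiff u hu e).differentiable one_ne_zero) x
    have h2 : DifferentiableAt ℝ (fun y => fderiv ℝ v y e) x :=
      ((pd_contDiff v hv e).differentiable one_ne_zero) x
    rw [fderiv_fun_add h1 (h2.const_mul a), fderiv_const_mul h2]
    simp
  exact Finset.sum_congr rfl (fun i _ => key i)

end Scat

open Scat in
theorem scattering_length_formula
    (V : R3 → ℝ) (f : R3 → ℝ) (a₀ : ℝ)
    -- V is a short-range, repulsive potential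
    (hVsupp : HasCompactSupport V) (hVpos : ∀ x, 0 ≤ V x) (hVcont : Continuous V)
    -- f solves the zero-energy scattering equation (−Δ + ½V) f = 0
    (hf : ContDiff ℝ 2 f)
    (hscat : ∀ x : R3, -laplacian f x + (1 / 2) * V x * f x = 0)
    -- with boundary condition f(x) → 1 as |x| → ∞
    (hbc : Tendsto f (cocompact R3) (nhds 1))
    -- outside the support of V, f(x) = 1 − a₀/|x| defines the scattering length
    (hout : ∀ x : R3, x ∉ tsupport V → f x = 1 - a₀ / ‖x‖) :
    8 * Real.pi * a₀ = ∫ x : R3, V x * f x := by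
  obtain ⟨R, hR0, hRV⟩ := hVsupp.isBounded.subset_ball_lt 0 0
  set c : ℝ := R ^ 2 with hcdef
  have hc : 0 < c := by positivity
  have hRc : c = R ^ 2 := rfl
  set W : R3 → ℝ := Scat.w c with hW
  -- the compactly supported combination g
  set g : R3 → ℝ := fun y => f y - a₀ * W y - 1 with hg
  have hg2 : ContDiff ℝ 2 g :=
    (hf.sub (contDiff_const.mul (contDiff_w hc))).sub contDiff_const
  have hgzero : ∀ x : R3, R ≤ ‖x‖ → g x = 0 := by
    intro x hx
    have hxV : x ∉ tsupport V := fun hmem => by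
      have := hRV hmem
      rw [Metric.mem_ball, dist_zero_right] at this
      linarith
    have hxn : (0:ℝ) < ‖x‖ := lt_of_lt_of_le hR0 hx
    have hw : W x = -‖x‖⁻¹ := w_eq hc (by nlinarith)
    have hfx := hout x hxV
    simp only [hg, hfx, hw]
    field_simp
    ring
  have hgsupp : HasCompactSupport g := by
    apply HasCompactSupport.intro (isCompact_closedBall (0:R3) R)
    intro x hx
    simp only [Metric.mem_closedBall, dist_zero_right, not_le] at hx
    exact hgzero x hx.le
  have hfdecomp : f = fun y => g y + a₀ * W y + 1 := by
    funext y; simp only [hg]; ring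
  have hlap : ∀ x : R3, laplacian f x = laplacian g x + a₀ * laplacian W x := by
    intro x
    calc laplacian f x = laplacian (fun y => g y + a₀ * W y + 1) x := by rw [← hfdecomp]
    _ = laplacian g x + a₀ * laplacian W x :=
        laplacian_comb g W hg2 (contDiff_w hc) a₀ 1 x
  have hVf : ∀ x : R3, V x * f x = 2 * laplacian f x := by
    intro x
    have := hscat x
    linarith
  have hVfint : Integrable (fun x : R3 => V x * f x) (volume : Measure R3) :=
    (hVcont.mul hf.continuous).integrable_of_hasCompactSupport (hVsupp.mul_right)
  have hlapfint : Integrable (laplacian f) (volume : Measure R3) := by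
    have : laplacian f = fun x => (1/2) * (V x * f x) := by
      funext x; have := hscat x; linarith
    rw [this]
    exact hVfint.const_mul _
  have hlapwint : Integrable (laplacian W) (volume : Measure R3) :=
    integrable_laplacian_w hc hR0 hRc
  have hlapgint : Integrable (laplacian g) (volume : Measure R3) := by
    have e : laplacian g = fun x => laplacian f x - a₀ * laplacian W x := by
      funext x; have := hlap x; linarith
    rw [e]
    exact hlapfint.sub (hlapwint.const_mul a₀)
  have hintf : ∫ x : R3, laplacian f x = a₀ * (4 * Real.pi) := by
    have e : (fun x : R3 => laplacian f x)
        = fun x => laplacian g x + a₀ * laplacian W x := funext hlap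
    rw [e, integral_add hlapgint (hlapwint.const_mul a₀),
      integral_laplacian_eq_zero g hg2 hgsupp, integral_const_mul,
      integral_laplacian_w hc hR0 hRc]
    ring
  calc 8 * Real.pi * a₀ = 2 * (a₀ * (4 * Real.pi)) := by ring
  _ = 2 * ∫ x : R3, laplacian f x := by rw [hintf]
  _ = ∫ x : R3, 2 * laplacian f x := (integral_const_mul 2 _).symm
  _ = ∫ x : R3, V x * f x := by
      congr 1
      funext x
      exact (hVf x).symm
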